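/- Let A, B be symmetric negative Laplacians on n nodes that agree except on the edge (i,j), where A_ij > B_ij = 0, and fix x₀ ∈ ℝⁿ with x₀(i) ≠ x₀(j). Define Λ(s,τ) = e^{sA} e^{2τB} e^{sA} − e^{2(s+τ)A}. Then there exist δ₀ > 0 such that for all 0 < τ ≤ s with s + τ ≤ δ₀, x₀ᵀ Λ(s,τ) x₀ > 0. -/

import Mathlib

open Matrix
open scoped Nat

section Helpers

variable {𝔸 : Type*} [NormedRing 𝔸] [NormedAlgebra ℝ 𝔸] [CompleteSpace 𝔸]

lemma my_exp_taylor (x : 𝔸) {m : ℕ} (hm : 0 < m) :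
    ‖NormedSpace.exp x - ∑ k ∈ Finset.range m, (k !⁻¹ : ℝ) • x ^ k‖
      ≤ ‖x‖ ^ m * Real.exp ‖x‖ := by
  have hf : Summable fun n : ℕ => (n !⁻¹ : ℝ) • x ^ n := NormedSpace.expSeries_summable' x
  have h1 : NormedSpace.exp x - ∑ k ∈ Finset.range m, (k !⁻¹ : ℝ) • x ^ k
      = ∑' n : ℕ, ((n + m)!⁻¹ : ℝ) • x ^ (n + m) := by
    simp only [NormedSpace.exp_eq_tsum ℝ]
    rw [← Summable.sum_add_tsum_nat_add m hf, add_sub_cancel_left]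
  have hnorm : Summable fun n : ℕ => ‖((n + m)!⁻¹ : ℝ) • x ^ (n + m)‖ :=
    (summable_nat_add_iff m).mpr (NormedSpace.norm_expSeries_summable' x)
  have hg : Summable fun n : ℕ => ‖x‖ ^ m * ((n !⁻¹ : ℝ) * ‖x‖ ^ n) := by
    have := (Real.summable_pow_div_factorial ‖x‖).mul_left (‖x‖ ^ m)
    simpa [div_eq_mul_inv, mul_comm] using this
  have hbound : ∀ n : ℕ, ‖((n + m)!⁻¹ : ℝ) • x ^ (n + m)‖
      ≤ ‖x‖ ^ m * ((n !⁻¹ : ℝ) * ‖x‖ ^ n) := by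
    intro n
    rw [norm_smul, Real.norm_eq_abs, abs_of_nonneg (by positivity)]
    have h2 : ‖x ^ (n + m)‖ ≤ ‖x‖ ^ (n + m) := norm_pow_le' x (by omega)
    have h3 : ((n + m)!⁻¹ : ℝ) ≤ (n !⁻¹ : ℝ) := by
      apply inv_anti₀ (by positivity)
      exact_mod_cast Nat.factorial_le (Nat.le_add_right n m)
    calc ((n + m)!⁻¹ : ℝ) * ‖x ^ (n + m)‖ ≤ (n !⁻¹ : ℝ) * ‖x‖ ^ (n + m) :=
          mul_le_mul h3 h2 (norm_nonneg _) (by positivity)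
      _ = ‖x‖ ^ m * ((n !⁻¹ : ℝ) * ‖x‖ ^ n) := by rw [pow_add]; ring
  rw [h1]
  calc ‖∑' n : ℕ, ((n + m)!⁻¹ : ℝ) • x ^ (n + m)‖
      ≤ ∑' n : ℕ, ‖((n + m)!⁻¹ : ℝ) • x ^ (n + m)‖ := norm_tsum_le_tsum_norm hnorm
    _ ≤ ∑' n : ℕ, ‖x‖ ^ m * ((n !⁻¹ : ℝ) * ‖x‖ ^ n) := Summable.tsum_le_tsum hbound hnorm hg
    _ = ‖x‖ ^ m * Real.exp ‖x‖ := by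
        rw [tsum_mul_left, Real.exp_eq_exp_ℝ, NormedSpace.exp_eq_tsum ℝ]
        simp [smul_eq_mul]

lemma my_exp_taylor1 (x : 𝔸) :
    ‖NormedSpace.exp x - 1‖ ≤ ‖x‖ * Real.exp ‖x‖ := by
  have := my_exp_taylor x (m := 1) one_pos
  simpa using this

lemma my_exp_taylor2 (x : 𝔸) :
    ‖NormedSpace.exp x - 1 - x‖ ≤ ‖x‖ ^ 2 * Real.exp ‖x‖ := by
  have := my_exp_taylor x (m := 2) two_pos
  simpa [Finset.sum_range_succ, sub_sub] using this

lemma my_dot_bound {n : ℕ} (v w : Fin n → ℝ) : |v ⬝ᵥ w| ≤ n * (‖v‖ * ‖w‖) := by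
  calc |v ⬝ᵥ w| ≤ ∑ k, |v k * w k| := Finset.abs_sum_le_sum_abs _ _
    _ ≤ ∑ _k : Fin n, ‖v‖ * ‖w‖ := by
        refine Finset.sum_le_sum fun k _ => ?_
        rw [abs_mul]
        have h1 : |v k| ≤ ‖v‖ := by simpa using norm_le_pi_norm v k
        have h2 : |w k| ≤ ‖w‖ := by simpa using norm_le_pi_norm w k
        exact mul_le_mul h1 h2 (abs_nonneg _) (norm_nonneg _)
    _ = n * (‖v‖ * ‖w‖) := by simp [Finset.sum_const, Finset.card_univ, nsmul_eq_mul]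

lemma my_dot_update {n : ℕ} (y : Fin n → ℝ) (a : Fin n) (t : ℝ) :
    y ⬝ᵥ Function.update (0 : Fin n → ℝ) a t = y a * t := by
  rw [show Function.update (0 : Fin n → ℝ) a t = Pi.single a t from rfl,
    dotProduct_single]

end Helpers
open Matrix

lemma my_struct {n : ℕ} (A B : Matrix (Fin n) (Fin n) ℝ) (i j : Fin n) (hij : i ≠ j)
    (hAsymm : A.IsSymm) (hBsymm : B.IsSymm)
    (hArow : ∀ k, ∑ l, A k l = 0) (hBrow : ∀ k, ∑ l, B k l = 0)
    (hagree : ∀ k l, k ≠ l → ¬((k = i ∧ l = j) ∨ (k = j ∧ l = i)) → A k l = B k l)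
    (hB0 : B i j = 0) :
    B - A = (A i j) • (Matrix.single i i (1 : ℝ) + Matrix.single j j 1
      - Matrix.single i j 1 - Matrix.single j i 1) := by
  set c := A i j with hc
  have hMij : B i j - A i j = -c := by rw [hB0]; ring
  have hMji : B j i - A j i = -c := by rw [hBsymm.apply i j, hAsymm.apply i j, hB0]; ring
  have hMoff : ∀ k l, k ≠ l → ¬((k = i ∧ l = j) ∨ (k = j ∧ l = i)) → B k l - A k l = 0 := by
    intro k l h1 h2; rw [hagree k l h1 h2]; ring
  have hMrow : ∀ k, ∑ l, (B k l - A k l) = 0 := by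
    intro k
    rw [Finset.sum_sub_distrib, hArow, hBrow, sub_zero]
  have hdiag : ∀ k, B k k - A k k = (if k = i ∨ k = j then c else 0) := by
    intro k
    have hr := hMrow k
    rw [← Finset.add_sum_erase _ _ (Finset.mem_univ k)] at hr
    by_cases hki : k = i
    · subst hki
      have hsum : ∑ l ∈ Finset.univ.erase k, (B k l - A k l) = -c := by
        rw [Finset.sum_eq_single_of_mem j
          (Finset.mem_erase.mpr ⟨Ne.symm hij, Finset.mem_univ j⟩)]
        · exact hMij
        · intro l _ hlj
          have hlk : l ≠ k := fun h => by
            have := Finset.mem_erase.mp ‹l ∈ Finset.univ.erase k› |>.1; exact this h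
          exact hMoff k l (Ne.symm hlk) (by
            rintro (⟨-, h2⟩ | ⟨h1, -⟩)
            · exact hlj h2
            · exact hij h1)
      rw [if_pos (Or.inl rfl)]
      linarith [hr, hsum]
    · by_cases hkj : k = j
      · subst hkj
        have hsum : ∑ l ∈ Finset.univ.erase k, (B k l - A k l) = -c := by
          rw [Finset.sum_eq_single_of_mem i
            (Finset.mem_erase.mpr ⟨hij, Finset.mem_univ i⟩)]
          · exact hMji
          · intro l hl hli
            have hlk : l ≠ k := (Finset.mem_erase.mp hl).1
            exact hMoff k l (Ne.symm hlk) (by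
              rintro (⟨h1, -⟩ | ⟨-, h2⟩)
              · exact hij h1.symm
              · exact hli h2)
        rw [if_pos (Or.inr rfl)]
        linarith [hr, hsum]
      · have hsum : ∑ l ∈ Finset.univ.erase k, (B k l - A k l) = 0 := by
          apply Finset.sum_eq_zero
          intro l hl
          have hlk : l ≠ k := (Finset.mem_erase.mp hl).1
          exact hMoff k l (Ne.symm hlk) (by
            rintro (⟨h1, -⟩ | ⟨h1, -⟩)
            · exact hki h1
            · exact hkj h1)
        rw [if_neg (by tauto)]
        linarith [hr, hsum]
  ext k l
  simp only [Matrix.sub_apply, Matrix.smul_apply, Matrix.add_apply, smul_eq_mul,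
    Matrix.single, Matrix.of_apply]
  by_cases hkl : k = l
  · subst hkl
    have := hdiag k
    by_cases hki : k = i
    · subst hki
      simp only [if_pos (Or.inl rfl)] at this
      rw [this]
      simp [hij, Ne.symm hij]
    · by_cases hkj : k = j
      · subst hkj
        simp only [if_pos (Or.inr rfl)] at this
        rw [this]
        simp [hij, Ne.symm hij]
      · simp only [if_neg (by tauto : ¬(k = i ∨ k = j))] at this
        rw [this]
        simp [Ne.symm hki, Ne.symm hkj]
  · by_cases hki : k = i
    · subst hki
      by_cases hlj : l = j
      · subst hlj
        rw [hMij]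
        simp [hij, Ne.symm hij, Ne.symm hkl]
      · rw [hMoff k l hkl (by
          rintro (⟨-, h2⟩ | ⟨h1, -⟩)
          · exact hlj h2
          · exact hij h1)]
        have h1 : j ≠ l := fun h => hlj h.symm
        simp [hkl, hlj, h1]
    · by_cases hkj : k = j
      · subst hkj
        by_cases hli : l = i
        · subst hli
          rw [hMji]
          simp [hij, Ne.symm hij, Ne.symm hkl]
        · rw [hMoff k l hkl (by
            rintro (⟨h1, -⟩ | ⟨-, h2⟩)
            · exact hij h1.symm
            · exact hli h2)]
          have h1 : i ≠ l := fun h => hli h.symm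
          simp [hkl, hli, h1, Ne.symm hki]
      · rw [hMoff k l hkl (by
          rintro (⟨h1, -⟩ | ⟨h1, -⟩)
          · exact hki h1
          · exact hkj h1)]
        simp [Ne.symm hki, Ne.symm hkj]

lemma my_sandwich {n : ℕ} (E D : Matrix (Fin n) (Fin n) ℝ) (hE : Eᵀ = E) (x : Fin n → ℝ) :
    x ⬝ᵥ ((E * D * E) *ᵥ x) = (E *ᵥ x) ⬝ᵥ (D *ᵥ (E *ᵥ x)) := by
  rw [← Matrix.mulVec_mulVec, ← Matrix.mulVec_mulVec, Matrix.dotProduct_mulVec,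
    ← Matrix.mulVec_transpose, hE]

lemma my_quad {n : ℕ} (A B : Matrix (Fin n) (Fin n) ℝ) (i j : Fin n) (hij : i ≠ j)
    (hAsymm : A.IsSymm) (hBsymm : B.IsSymm)
    (hArow : ∀ k, ∑ l, A k l = 0) (hBrow : ∀ k, ∑ l, B k l = 0)
    (hagree : ∀ k l, k ≠ l → ¬((k = i ∧ l = j) ∨ (k = j ∧ l = i)) → A k l = B k l)
    (hB0 : B i j = 0) (y : Fin n → ℝ) :
    y ⬝ᵥ ((B - A) *ᵥ y) = A i j * (y i - y j) ^ 2 := by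
  rw [my_struct A B i j hij hAsymm hBsymm hArow hBrow hagree hB0,
    Matrix.smul_mulVec, dotProduct_smul]
  rw [Matrix.sub_mulVec, Matrix.sub_mulVec, Matrix.add_mulVec]
  simp only [Matrix.single_mulVec]
  rw [dotProduct_sub, dotProduct_sub, dotProduct_add,
    my_dot_update, my_dot_update, my_dot_update, my_dot_update, smul_eq_mul]
  ring

set_option maxHeartbeats 1600000 in
/-- Breaking a link between disagreeing nodes strictly slows convergence for short
horizons: with `Λ(s,τ) = e^{sA} e^{2τB} e^{sA} − e^{2(s+τ)A}`, there is `δ₀ > 0`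
such that `x₀ᵀ Λ(s,τ) x₀ > 0` whenever `0 < τ ≤ s` and `s + τ ≤ δ₀`. -/
theorem stmt_13 {n : ℕ} (A B : Matrix (Fin n) (Fin n) ℝ) (i j : Fin n) (hij : i ≠ j)
    (hAsymm : A.IsSymm) (hBsymm : B.IsSymm)
    (hArow : ∀ k, ∑ l, A k l = 0) (hBrow : ∀ k, ∑ l, B k l = 0)
    (hAoff : ∀ k l, k ≠ l → 0 ≤ A k l) (hBoff : ∀ k l, k ≠ l → 0 ≤ B k l)
    (hagree : ∀ k l, k ≠ l → ¬((k = i ∧ l = j) ∨ (k = j ∧ l = i)) → A k l = B k l)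
    (hB0 : B i j = 0) (hA0 : A i j > 0)
    (x₀ : Fin n → ℝ) (hx₀ : x₀ i ≠ x₀ j) :
    ∃ δ₀ : ℝ, 0 < δ₀ ∧ ∀ s τ : ℝ, 0 < τ → τ ≤ s → s + τ ≤ δ₀ →
      0 < x₀ ⬝ᵥ ((NormedSpace.exp (s • A) * NormedSpace.exp ((2 * τ) • B) *
            NormedSpace.exp (s • A) -
          NormedSpace.exp ((2 * (s + τ)) • A)) *ᵥ x₀) := by
  letI : NormedRing (Matrix (Fin n) (Fin n) ℝ) := Matrix.linftyOpNormedRing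
  letI : NormedAlgebra ℝ (Matrix (Fin n) (Fin n) ℝ) := Matrix.linftyOpNormedAlgebra
  set c := A i j with hc
  set d := x₀ i - x₀ j with hd
  have hd0 : d ≠ 0 := sub_ne_zero.mpr hx₀
  have hd2 : 0 < d ^ 2 := by positivity
  set L : ℝ := ‖A‖ * Real.exp ‖A‖ * ‖x₀‖ with hL
  have hL0 : 0 ≤ L := by rw [hL]; positivity
  set Y : ℝ := ‖x₀‖ * (1 + ‖A‖ * Real.exp ‖A‖) with hY
  have hY0 : 0 ≤ Y := by rw [hY]; positivity
  set K : ℝ := 4 * ‖A‖ ^ 2 * Real.exp (2 * ‖A‖) + 4 * ‖B‖ ^ 2 * Real.exp (2 * ‖B‖) with hK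
  have hK0 : 0 ≤ K := by rw [hK]; positivity
  set C : ℝ := n * Y ^ 2 * K with hC
  have hC0 : 0 ≤ C := by rw [hC]; positivity
  refine ⟨min 1 (min (|d| / (4 * L + 1)) ((c * d ^ 2 / 2) / (C + 1))), ?_, ?_⟩
  · have h1 : (0:ℝ) < |d| / (4 * L + 1) := by positivity
    have h2 : (0:ℝ) < (c * d ^ 2 / 2) / (C + 1) := by positivity
    simp only [lt_min_iff]
    exact ⟨one_pos, h1, h2⟩
  intro s τ hτ hτs hsδ
  show 0 < x₀ ⬝ᵥ ((NormedSpace.exp (s • A) * NormedSpace.exp ((2 * τ) • B) *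
        NormedSpace.exp (s • A) - NormedSpace.exp ((2 * (s + τ)) • A)) *ᵥ x₀)
  have hs : 0 < s := lt_of_lt_of_le hτ hτs
  have hsτ1 : s + τ ≤ 1 := le_trans hsδ (min_le_left _ _)
  have hs1 : s ≤ 1 := by linarith
  have hτ1 : τ ≤ 1 := by linarith
  have hsd : s ≤ |d| / (4 * L + 1) :=
    le_trans (by linarith) (le_trans hsδ (le_trans (min_le_right _ _) (min_le_left _ _)))
  have hτd : τ ≤ (c * d ^ 2 / 2) / (C + 1) :=
    le_trans (by linarith) (le_trans hsδ (le_trans (min_le_right _ _) (min_le_right _ _)))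
  -- Step 1: collapse the pure-A exponentials
  have hcomm : Commute (s • A) ((2 * τ) • A) :=
    ((Commute.refl A).smul_left s).smul_right (2 * τ)
  have hcomm2 : Commute (s • A + (2 * τ) • A) (s • A) :=
    (Commute.refl (s • A)).add_left hcomm.symm
  have hsc : s • A + (2 * τ) • A + s • A = (2 * (s + τ)) • A := by
    rw [← add_smul, ← add_smul]; congr 1; ring
  have hEsum : NormedSpace.exp (s • A) * NormedSpace.exp ((2 * τ) • A) *
      NormedSpace.exp (s • A) = NormedSpace.exp ((2 * (s + τ)) • A) := by
    rw [← Matrix.exp_add_of_commute _ _ hcomm, ← Matrix.exp_add_of_commute _ _ hcomm2, hsc]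
  set E := NormedSpace.exp (s • A) with hE
  set D := NormedSpace.exp ((2 * τ) • B) - NormedSpace.exp ((2 * τ) • A) with hD
  have hΛ : E * NormedSpace.exp ((2 * τ) • B) * E -
      NormedSpace.exp ((2 * (s + τ)) • A) = E * D * E := by
    rw [hD, ← hEsum]; noncomm_ring
  rw [hΛ]
  -- Step 2: pass to the quadratic form in y
  have hEsymm : Eᵀ = E := by
    have h := Matrix.exp_transpose (s • A)
    rw [Matrix.transpose_smul, hAsymm] at h
    exact h.symm
  set y := E *ᵥ x₀ with hy
  have hquadE : x₀ ⬝ᵥ ((E * D * E) *ᵥ x₀) = y ⬝ᵥ (D *ᵥ y) :=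
    my_sandwich E D hEsymm x₀
  rw [hquadE]
  clear hquadE hΛ hEsum hsc hcomm hcomm2 hsδ
  clear_value E D y
  -- Step 3: norm estimates
  have hnsA : ‖s • A‖ = s * ‖A‖ := by
    rw [norm_smul, Real.norm_eq_abs, abs_of_pos hs]
  have hn2B : ‖(2 * τ) • B‖ = 2 * τ * ‖B‖ := by
    rw [norm_smul, Real.norm_eq_abs, abs_of_pos (by linarith)]
  have hn2A : ‖(2 * τ) • A‖ = 2 * τ * ‖A‖ := by
    rw [norm_smul, Real.norm_eq_abs, abs_of_pos (by linarith)]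
  set R := D - (2 * τ) • (B - A) with hR
  clear_value R
  have hRid : R = (NormedSpace.exp ((2 * τ) • B) - 1 - (2 * τ) • B)
      - (NormedSpace.exp ((2 * τ) • A) - 1 - (2 * τ) • A) := by
    rw [hR, hD, smul_sub]; abel
  have hnA0 : (0:ℝ) ≤ ‖A‖ := norm_nonneg _
  have hnB0 : (0:ℝ) ≤ ‖B‖ := norm_nonneg _
  have hRbound : ‖R‖ ≤ τ ^ 2 * K := by
    have h1 := my_exp_taylor2 ((2 * τ) • B)
    have h2 := my_exp_taylor2 ((2 * τ) • A)
    rw [hn2B] at h1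
    rw [hn2A] at h2
    have e1 : Real.exp (2 * τ * ‖B‖) ≤ Real.exp (2 * ‖B‖) :=
      Real.exp_le_exp.mpr (mul_le_mul_of_nonneg_right (by linarith) hnB0)
    have e2 : Real.exp (2 * τ * ‖A‖) ≤ Real.exp (2 * ‖A‖) :=
      Real.exp_le_exp.mpr (mul_le_mul_of_nonneg_right (by linarith) hnA0)
    have b1 : ‖NormedSpace.exp ((2 * τ) • B) - 1 - (2 * τ) • B‖
        ≤ 4 * τ ^ 2 * ‖B‖ ^ 2 * Real.exp (2 * ‖B‖) := by
      refine h1.trans ?_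
      have := mul_le_mul_of_nonneg_left e1 (sq_nonneg (2 * τ * ‖B‖))
      nlinarith [this]
    have b2 : ‖NormedSpace.exp ((2 * τ) • A) - 1 - (2 * τ) • A‖
        ≤ 4 * τ ^ 2 * ‖A‖ ^ 2 * Real.exp (2 * ‖A‖) := by
      refine h2.trans ?_
      have := mul_le_mul_of_nonneg_left e2 (sq_nonneg (2 * τ * ‖A‖))
      nlinarith [this]
    rw [hRid, hK]
    refine (norm_sub_le _ _).trans ?_
    nlinarith [b1, b2]
  have hE1 : ‖E - 1‖ ≤ s * (‖A‖ * Real.exp ‖A‖) := by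
    have h := my_exp_taylor1 (s • A)
    rw [hnsA] at h
    rw [hE]
    refine h.trans ?_
    have e3 : Real.exp (s * ‖A‖) ≤ Real.exp ‖A‖ := by
      refine Real.exp_le_exp.mpr ?_
      calc s * ‖A‖ ≤ 1 * ‖A‖ := mul_le_mul_of_nonneg_right hs1 hnA0
        _ = ‖A‖ := one_mul _
    have := mul_le_mul_of_nonneg_left e3 (by positivity : (0:ℝ) ≤ s * ‖A‖)
    nlinarith [this]
  have hyx : ‖y - x₀‖ ≤ s * L := by
    have h1 : y - x₀ = (E - 1) *ᵥ x₀ := by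
      rw [hy, Matrix.sub_mulVec, Matrix.one_mulVec]
    rw [h1]
    refine (Matrix.linfty_opNorm_mulVec _ _).trans ?_
    calc ‖E - 1‖ * ‖x₀‖ ≤ (s * (‖A‖ * Real.exp ‖A‖)) * ‖x₀‖ :=
          mul_le_mul_of_nonneg_right hE1 (norm_nonneg _)
      _ = s * L := by rw [hL]; ring
  have hyY : ‖y‖ ≤ Y := by
    have h1 : ‖y‖ ≤ ‖x₀‖ + ‖y - x₀‖ := by
      calc ‖y‖ = ‖x₀ + (y - x₀)‖ := by rw [add_sub_cancel]
        _ ≤ ‖x₀‖ + ‖y - x₀‖ := norm_add_le _ _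
    have h2 : s * L ≤ L := by nlinarith
    have h3 : ‖x₀‖ + L = Y := by rw [hY, hL]; ring
    linarith
  have hyk : ∀ k, |y k - x₀ k| ≤ s * L := by
    intro k
    have h := norm_le_pi_norm (y - x₀) k
    simp only [Pi.sub_apply, Real.norm_eq_abs] at h
    exact h.trans hyx
  have hdiff : |(y i - y j) - d| ≤ 2 * (s * L) := by
    have hi := hyk i
    have hj := hyk j
    have hre : (y i - y j) - d = (y i - x₀ i) - (y j - x₀ j) := by rw [hd]; ring
    rw [hre, sub_eq_add_neg]
    calc |(y i - x₀ i) + -(y j - x₀ j)| ≤ |y i - x₀ i| + |-(y j - x₀ j)| := abs_add_le _ _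
      _ = |y i - x₀ i| + |y j - x₀ j| := by rw [abs_neg]
      _ ≤ 2 * (s * L) := by linarith
  have hsL : 2 * (s * L) ≤ |d| / 2 := by
    have h4 : (0:ℝ) < 4 * L + 1 := by linarith
    have h5 : s * (4 * L + 1) ≤ |d| := (le_div_iff₀ h4).mp hsd
    nlinarith [hs.le, hL0]
  have hq : d ^ 2 / 4 ≤ (y i - y j) ^ 2 := by
    have h6 : |d| / 2 ≤ |y i - y j| := by
      have h7 := abs_sub_abs_le_abs_sub d (y i - y j)
      have h8 : |d - (y i - y j)| = |(y i - y j) - d| := abs_sub_comm _ _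
      rw [h8] at h7
      linarith
    have h9 : (|d| / 2) * (|d| / 2) ≤ |y i - y j| * |y i - y j| :=
      mul_self_le_mul_self (by positivity) h6
    calc d ^ 2 / 4 = (|d| / 2) * (|d| / 2) := by rw [← sq_abs d]; ring
      _ ≤ |y i - y j| * |y i - y j| := h9
      _ = (y i - y j) ^ 2 := by rw [← sq_abs (y i - y j)]; ring
  have hrsmall : |y ⬝ᵥ (R *ᵥ y)| ≤ C * τ ^ 2 := by
    refine (my_dot_bound y (R *ᵥ y)).trans ?_
    have h6 : ‖R *ᵥ y‖ ≤ ‖R‖ * ‖y‖ := Matrix.linfty_opNorm_mulVec _ _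
    have h7 : ‖y‖ * ‖R *ᵥ y‖ ≤ Y * (τ ^ 2 * K * Y) := by
      calc ‖y‖ * ‖R *ᵥ y‖ ≤ Y * (‖R‖ * ‖y‖) :=
            mul_le_mul hyY h6 (norm_nonneg _) hY0
        _ ≤ Y * (τ ^ 2 * K * Y) := by
            refine mul_le_mul_of_nonneg_left ?_ hY0
            exact mul_le_mul hRbound hyY (norm_nonneg _) (by positivity)
    calc (n:ℝ) * (‖y‖ * ‖R *ᵥ y‖) ≤ n * (Y * (τ ^ 2 * K * Y)) :=
          mul_le_mul_of_nonneg_left h7 (Nat.cast_nonneg n)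
      _ = C * τ ^ 2 := by rw [hC]; ring
  -- Step 4: split and conclude
  have hsplit : y ⬝ᵥ (D *ᵥ y) = 2 * τ * (c * (y i - y j) ^ 2) + y ⬝ᵥ (R *ᵥ y) := by
    have hDdec : D = (2 * τ) • (B - A) + R := by rw [hR]; abel
    rw [hDdec, Matrix.add_mulVec, dotProduct_add, Matrix.smul_mulVec,
      dotProduct_smul, my_quad A B i j hij hAsymm hBsymm hArow hBrow hagree hB0 y,
      smul_eq_mul, ← hc]
  rw [hsplit]
  have hτC : τ * (C + 1) ≤ c * d ^ 2 / 2 := (le_div_iff₀ (by linarith)).mp hτd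
  nlinarith [mul_le_mul_of_nonneg_left hq (by positivity : (0:ℝ) ≤ 2 * τ * c),
    mul_le_mul_of_nonneg_left hτC hτ.le, (abs_le.mp hrsmall).1, mul_pos hτ hτ]
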